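/- arXiv:2602.16067 — 2 statements merged into one kernel-verified Lean document; each statement's English description precedes it below -/
import Mathlib

section
/- Let D = Σ_j D_{L_j} be a total dissipator on M_d(ℂ). Define Δ(x) := x − (tr x / d)·I, let D† be the adjoint of D with respect to the Hilbert–Schmidt inner product ⟨A, B⟩ = tr(A†B), let D̃ := Δ ∘ ((D + D†)/2) ∘ Δ, and set μ₂ := sup{ ⟨x, D̃(x)⟩ : x ∈ M_d(ℂ) Hermitian, tr x = 0, ‖x‖₂ = 1 }, where ‖x‖₂ = √(tr(x†x)) is the Frobenius norm. If μ₂ < 0, then for every time-dependent Hermitian Hamiltonian H (with continuous entries), every pair of solutions ρ, σ of the master equation for L_t = −i[H(t), ·] + D whose values at time s are density matrices satisfies ‖ρ(t) − σ(t)‖₂ ≤ e^{−|μ₂|·(t−s)}·‖ρ(s) − σ(s)‖₂ for all t ≥ s ≥ 0, and hence ‖ρ(t) − σ(t)‖₁ ≤ √d·e^{−|μ₂|·(t−s)}·‖ρ(s) − σ(s)‖₁. In particular, D is Hamiltonian-independently contractive with contraction rate at least |μ₂| and constant K = √d. -/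
open scoped ComplexOrder Kronecker
open Matrix

namespace Paper

variable {n : Type*} [Fintype n] [DecidableEq n]

/-- Trace norm: sum of singular values. -/
noncomputable def traceNorm (A : Matrix n n ℂ) : ℝ :=
  ∑ i, Real.sqrt ((Matrix.posSemidef_conjTranspose_mul_self A).isHermitian.eigenvalues i)

/-- The dissipator associated with a single jump operator. -/
noncomputable def dissipator (L x : Matrix n n ℂ) : Matrix n n ℂ :=
  L * x * Lᴴ - ((1 : ℂ)/2) • (Lᴴ * L * x + x * (Lᴴ * L))

/-- Total dissipator of a family of jump operators. -/
noncomputable def totalDissipator {m : ℕ} (L : Fin m → Matrix n n ℂ) (x : Matrix n n ℂ) :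
    Matrix n n ℂ :=
  ∑ j, dissipator (L j) x

/-- The Hamiltonian commutator term `-i[H, x]`. -/
noncomputable def hamTerm (H x : Matrix n n ℂ) : Matrix n n ℂ :=
  (-Complex.I) • (H * x - x * H)

/-- A solution of the master equation `ρ' = L_t(ρ)` starting at time `s`
(differentiable entrywise). -/
def IsSolution (Lt : ℝ → Matrix n n ℂ → Matrix n n ℂ) (s : ℝ) (ρ : ℝ → Matrix n n ℂ) : Prop :=
  ∀ t, s ≤ t → ∀ i j, HasDerivAt (fun u => ρ u i j) ((Lt t (ρ t)) i j) t

/-- Density matrix: Hermitian, positive semidefinite, trace one. -/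
def IsDensity (ρ : Matrix n n ℂ) : Prop := ρ.PosSemidef ∧ ρ.trace = 1

/-- Exponential contractivity with constants `K, γ` of a time-dependent Lindbladian. -/
def ExpContractiveWith (Lt : ℝ → Matrix n n ℂ → Matrix n n ℂ) (K γ : ℝ) : Prop :=
  ∀ s t : ℝ, 0 ≤ s → s ≤ t → ∀ ρ σ : ℝ → Matrix n n ℂ,
    IsSolution Lt s ρ → IsSolution Lt s σ → IsDensity (ρ s) → IsDensity (σ s) →
    traceNorm (ρ t - σ t) ≤ K * Real.exp (-γ * (t - s)) * traceNorm (ρ s - σ s)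

/-- Exponential contractivity of a time-dependent Lindbladian. -/
def ExpContractive (Lt : ℝ → Matrix n n ℂ → Matrix n n ℂ) : Prop :=
  ∃ K γ : ℝ, 0 < K ∧ 0 < γ ∧ ExpContractiveWith Lt K γ

/-- Time-dependent Hamiltonian: Hermitian values and continuous entries. -/
def IsHamiltonianFamily (H : ℝ → Matrix n n ℂ) : Prop :=
  (∀ t, (H t).IsHermitian) ∧ ∀ i j, Continuous fun t => H t i j

/-- Driven Lindbladian `x ↦ -i[H(t), x] + D(x)`. -/
noncomputable def driven {m : ℕ} (H : ℝ → Matrix n n ℂ) (L : Fin m → Matrix n n ℂ)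
    (t : ℝ) (x : Matrix n n ℂ) : Matrix n n ℂ :=
  hamTerm (H t) x + totalDissipator L x

/-- Hamiltonian-independent contractivity of a dissipator. -/
def HamIndepContractive {m : ℕ} (L : Fin m → Matrix n n ℂ) : Prop :=
  ∀ H : ℝ → Matrix n n ℂ, IsHamiltonianFamily H → ExpContractive (driven H L)

/-- The operator norm (largest singular value). -/
noncomputable def opNorm (A : Matrix n n ℂ) : ℝ :=
  ‖LinearMap.toContinuousLinearMap (Matrix.toEuclideanLin A)‖

end Paper

namespace Paper

/-- `Δ(x) = x - (tr x / d)·I`. -/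
noncomputable def deltaOp {d : ℕ} (x : Matrix (Fin d) (Fin d) ℂ) : Matrix (Fin d) (Fin d) ℂ :=
  x - (x.trace / (d : ℂ)) • (1 : Matrix (Fin d) (Fin d) ℂ)

/-- Hilbert–Schmidt inner product `⟨A, B⟩ = tr(A† B)`. -/
noncomputable def hsInner {d : ℕ} (A B : Matrix (Fin d) (Fin d) ℂ) : ℂ := (Aᴴ * B).trace

/-- Frobenius (Hilbert–Schmidt) norm `‖A‖₂ = √(tr(A†A))`. -/
noncomputable def frobNorm {d : ℕ} (A : Matrix (Fin d) (Fin d) ℂ) : ℝ :=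
  Real.sqrt ((Aᴴ * A).trace.re)

noncomputable def toE (A : Matrix (Fin d) (Fin d) ℂ) : EuclideanSpace ℂ (Fin d × Fin d) :=
  (WithLp.equiv 2 _).symm (fun p : Fin d × Fin d => A p.1 p.2)

noncomputable def fromE (v : EuclideanSpace ℂ (Fin d × Fin d)) : Matrix (Fin d) (Fin d) ℂ :=
  Matrix.of fun i j => v (i, j)

@[simp] lemma toE_apply (A : Matrix (Fin d) (Fin d) ℂ) (p : Fin d × Fin d) :
    toE A p = A p.1 p.2 := rfl

@[simp] lemma fromE_toE (A : Matrix (Fin d) (Fin d) ℂ) : fromE (toE A) = A := rfl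
@[simp] lemma toE_fromE (v : EuclideanSpace ℂ (Fin d × Fin d)) : toE (fromE v) = v := rfl

lemma toE_add (A B : Matrix (Fin d) (Fin d) ℂ) : toE (A + B) = toE A + toE B := rfl
lemma toE_sub (A B : Matrix (Fin d) (Fin d) ℂ) : toE (A - B) = toE A - toE B := rfl
lemma toE_smul (c : ℂ) (A : Matrix (Fin d) (Fin d) ℂ) : toE (c • A) = c • toE A := rfl
lemma toE_zero : toE (0 : Matrix (Fin d) (Fin d) ℂ) = 0 := rfl

lemma toE_eq_zero {A : Matrix (Fin d) (Fin d) ℂ} (h : toE A = 0) : A = 0 := by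
  ext i j
  have := congrFun (congrArg (WithLp.equiv 2 _) h) (i, j)
  simpa using this

lemma inner_toE (A B : Matrix (Fin d) (Fin d) ℂ) :
    (inner ℂ (toE A) (toE B) : ℂ) = hsInner A B := by
  simp only [PiLp.inner_apply, RCLike.inner_apply, toE_apply]
  rw [hsInner]
  rw [Matrix.trace]
  simp only [Matrix.diag_apply, Matrix.mul_apply, Matrix.conjTranspose_apply]
  rw [Fintype.sum_prod_type]
  rw [Finset.sum_comm]
  simp [mul_comm]

lemma frobNorm_toE (A : Matrix (Fin d) (Fin d) ℂ) : frobNorm A = ‖toE A‖ := by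
  rw [frobNorm, EuclideanSpace.norm_eq]
  congr 1
  rw [Matrix.trace]
  simp only [Matrix.diag_apply, Matrix.mul_apply, Matrix.conjTranspose_apply]
  rw [Fintype.sum_prod_type]
  rw [Complex.re_sum]
  rw [Finset.sum_comm]
  congr 1; ext i
  rw [Complex.re_sum]
  congr 1; ext j
  simp [RCLike.conj_mul, ← Complex.ofReal_pow]

lemma hasDerivAt_toE {x : ℝ → Matrix (Fin d) (Fin d) ℂ} {y : Matrix (Fin d) (Fin d) ℂ}
    {t : ℝ} (h : ∀ i j, HasDerivAt (fun u => x u i j) (y i j) t) :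
    HasDerivAt (fun u => toE (x u)) (toE y) t := by
  have h1 : HasDerivAt (fun u => (fun p : Fin d × Fin d => x u p.1 p.2)) (fun p => y p.1 p.2) t :=
    hasDerivAt_pi.2 fun p => h p.1 p.2
  exact ((PiLp.continuousLinearEquiv 2 ℝ (fun _ : Fin d × Fin d => ℂ)).symm.toContinuousLinearMap.hasFDerivAt.comp_hasDerivAt t h1 :)

lemma norm_decay {v v' : ℝ → EuclideanSpace ℂ (Fin d × Fin d)} {s c : ℝ}
    (hd : ∀ t, s ≤ t → HasDerivAt v (v' t) t)
    (hb : ∀ t, s ≤ t → (inner ℂ (v t) (v' t) : ℂ).re ≤ c * ‖v t‖ ^ 2) :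
    ∀ t, s ≤ t → ‖v t‖ ≤ Real.exp (c * (t - s)) * ‖v s‖ := by
  set f : ℝ → ℝ := fun u => (inner ℂ (v u) (v u) : ℂ).re with hfdef
  have hfval : ∀ u, f u = ‖v u‖ ^ 2 := fun u => inner_self_eq_norm_sq (𝕜 := ℂ) (v u)
  have hf : ∀ t, s ≤ t → HasDerivAt f (2 * (inner ℂ (v t) (v' t) : ℂ).re) t := by
    intro t ht
    have h1 := (hd t ht).inner ℂ (hd t ht)
    have h3 : ((inner ℂ (v t) (v' t) : ℂ) + (inner ℂ (v' t) (v t) : ℂ)).re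
        = 2 * (inner ℂ (v t) (v' t) : ℂ).re := by
      rw [← inner_conj_symm (v t) (v' t)]
      simp only [Complex.add_re, Complex.conj_re]; ring
    have h2 : HasDerivAt f (((inner ℂ (v t) (v' t) : ℂ) + (inner ℂ (v' t) (v t) : ℂ)).re) t :=
      Complex.reCLM.hasFDerivAt.comp_hasDerivAt t h1
    rwa [h3] at h2
  set g : ℝ → ℝ := fun u => f u * Real.exp (-(2 * c) * u) with hgdef
  have hg : ∀ t, s ≤ t → HasDerivAt g
      (2 * (inner ℂ (v t) (v' t) : ℂ).re * Real.exp (-(2 * c) * t)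
        + f t * (Real.exp (-(2 * c) * t) * (-(2 * c) * 1))) t := by
    intro t ht
    exact (hf t ht).mul (((hasDerivAt_id t).const_mul (-(2 * c))).exp)
  have hanti : AntitoneOn g (Set.Ici s) := by
    apply antitoneOn_of_deriv_nonpos (convex_Ici s)
    · intro u hu
      exact (hg u hu).continuousAt.continuousWithinAt
    · intro u hu
      rw [interior_Ici] at hu
      exact ((hg u (le_of_lt hu)).differentiableAt).differentiableWithinAt
    · intro u hu
      rw [interior_Ici] at hu
      rw [(hg u (le_of_lt hu)).deriv]
      have hbu := hb u (le_of_lt hu)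
      have hfu : 0 ≤ f u := by rw [hfval]; positivity
      have hexp : 0 < Real.exp (-(2 * c) * u) := Real.exp_pos _
      rw [hfval u]
      nlinarith [hexp.le, mul_le_mul_of_nonneg_right hbu hexp.le]
  intro t ht
  have hgle := hanti (Set.self_mem_Ici) (Set.mem_Ici.2 ht) ht
  have hft : f t ≤ f s * Real.exp (2 * c * (t - s)) := by
    have hexp : 0 < Real.exp (-(2 * c) * t) := Real.exp_pos _
    have h2 : f t ≤ f s * Real.exp (-(2 * c) * s) / Real.exp (-(2 * c) * t) := by
      rw [le_div_iff₀ hexp]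
      simpa [hgdef] using hgle
    calc f t ≤ f s * Real.exp (-(2 * c) * s) / Real.exp (-(2 * c) * t) := h2
      _ = f s * Real.exp (2 * c * (t - s)) := by
          rw [mul_div_assoc, ← Real.exp_sub]; ring_nf
  have h4 : ‖v t‖ ^ 2 ≤ (Real.exp (c * (t - s)) * ‖v s‖) ^ 2 := by
    rw [← hfval]
    have hee : Real.exp (2 * c * (t - s)) = Real.exp (c * (t - s)) * Real.exp (c * (t - s)) := by
      rw [← Real.exp_add]; ring_nf
    calc f t ≤ f s * Real.exp (2 * c * (t - s)) := hft
      _ = (Real.exp (c * (t - s)) * ‖v s‖) ^ 2 := by rw [hfval s, hee]; ring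
  have h5 := Real.sqrt_le_sqrt h4
  rwa [Real.sqrt_sq (norm_nonneg _), Real.sqrt_sq (by positivity)] at h5
lemma dissipator_sub (L a b : Matrix (Fin d) (Fin d) ℂ) :
    dissipator L (a - b) = dissipator L a - dissipator L b := by
  simp only [dissipator, mul_sub, sub_mul]
  module

lemma dissipator_add (L a b : Matrix (Fin d) (Fin d) ℂ) :
    dissipator L (a + b) = dissipator L a + dissipator L b := by
  simp only [dissipator, mul_add, add_mul]
  module

lemma dissipator_smul (L : Matrix (Fin d) (Fin d) ℂ) (c : ℂ) (a : Matrix (Fin d) (Fin d) ℂ) :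
    dissipator L (c • a) = c • dissipator L a := by
  simp only [dissipator, mul_smul_comm, smul_mul_assoc]
  module

lemma totalDissipator_sub {m : ℕ} (L : Fin m → Matrix (Fin d) (Fin d) ℂ)
    (a b : Matrix (Fin d) (Fin d) ℂ) :
    totalDissipator L (a - b) = totalDissipator L a - totalDissipator L b := by
  simp [totalDissipator, dissipator_sub, Finset.sum_sub_distrib]

lemma totalDissipator_add {m : ℕ} (L : Fin m → Matrix (Fin d) (Fin d) ℂ)
    (a b : Matrix (Fin d) (Fin d) ℂ) :
    totalDissipator L (a + b) = totalDissipator L a + totalDissipator L b := by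
  simp [totalDissipator, dissipator_add, Finset.sum_add_distrib]

lemma totalDissipator_smul {m : ℕ} (L : Fin m → Matrix (Fin d) (Fin d) ℂ)
    (c : ℂ) (a : Matrix (Fin d) (Fin d) ℂ) :
    totalDissipator L (c • a) = c • totalDissipator L a := by
  simp [totalDissipator, dissipator_smul, Finset.smul_sum]

lemma hamTerm_sub (Hm a b : Matrix (Fin d) (Fin d) ℂ) :
    hamTerm Hm (a - b) = hamTerm Hm a - hamTerm Hm b := by
  simp only [hamTerm, mul_sub, sub_mul]
  module

lemma driven_sub {m : ℕ} (H : ℝ → Matrix (Fin d) (Fin d) ℂ) (L : Fin m → Matrix (Fin d) (Fin d) ℂ)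
    (t : ℝ) (a b : Matrix (Fin d) (Fin d) ℂ) :
    driven H L t (a - b) = driven H L t a - driven H L t b := by
  simp only [driven, hamTerm_sub, totalDissipator_sub]
  abel

lemma trace_dissipator (L z : Matrix (Fin d) (Fin d) ℂ) : (dissipator L z).trace = 0 := by
  rw [dissipator, Matrix.trace_sub, Matrix.trace_smul, Matrix.trace_add]
  rw [Matrix.trace_mul_cycle (A := L) (B := z) (C := Lᴴ)]
  rw [Matrix.trace_mul_comm z (Lᴴ * L)]
  simp only [smul_eq_mul]
  ring

lemma trace_driven {m : ℕ} (H : ℝ → Matrix (Fin d) (Fin d) ℂ) (L : Fin m → Matrix (Fin d) (Fin d) ℂ)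
    (t : ℝ) (z : Matrix (Fin d) (Fin d) ℂ) : (driven H L t z).trace = 0 := by
  rw [driven, Matrix.trace_add, hamTerm, Matrix.trace_smul, Matrix.trace_sub,
    Matrix.trace_mul_comm, totalDissipator, Matrix.trace_sum]
  simp [trace_dissipator]

lemma dissipator_conjTranspose (L z : Matrix (Fin d) (Fin d) ℂ) :
    (dissipator L z)ᴴ = dissipator L zᴴ := by
  have h2 : star ((1:ℂ)/2) = (1:ℂ)/2 := by norm_num
  simp only [dissipator, conjTranspose_sub, conjTranspose_smul, conjTranspose_add,
    conjTranspose_mul, conjTranspose_conjTranspose, h2, mul_assoc, add_comm]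

lemma hamTerm_conjTranspose {Hm : Matrix (Fin d) (Fin d) ℂ} (hH : Hm.IsHermitian)
    (z : Matrix (Fin d) (Fin d) ℂ) : (hamTerm Hm z)ᴴ = hamTerm Hm zᴴ := by
  simp only [hamTerm, conjTranspose_smul, conjTranspose_sub, conjTranspose_mul, hH.eq,
    star_neg, Complex.star_def, Complex.conj_I]
  module

lemma driven_conjTranspose {m : ℕ} {H : ℝ → Matrix (Fin d) (Fin d) ℂ}
    (L : Fin m → Matrix (Fin d) (Fin d) ℂ) {t : ℝ} (hH : (H t).IsHermitian)
    (z : Matrix (Fin d) (Fin d) ℂ) : (driven H L t z)ᴴ = driven H L t zᴴ := by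
  simp only [driven, conjTranspose_add, hamTerm_conjTranspose hH, totalDissipator,
    Matrix.conjTranspose_sum, dissipator_conjTranspose]

lemma re_hsInner_hamTerm {Hm : Matrix (Fin d) (Fin d) ℂ} (hH : Hm.IsHermitian)
    (z : Matrix (Fin d) (Fin d) ℂ) : (hsInner z (hamTerm Hm z)).re = 0 := by
  set a := (zᴴ * (Hm * z)).trace with ha
  set b := (zᴴ * (z * Hm)).trace with hb
  have hsa : star a = a := by
    rw [ha, ← Matrix.trace_conjTranspose]
    congr 1
    simp [conjTranspose_mul, hH.eq, mul_assoc]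
  have hsb : star b = b := by
    rw [hb, ← Matrix.trace_conjTranspose]
    rw [show (zᴴ * (z * Hm))ᴴ = Hm * (zᴴ * z) by simp [conjTranspose_mul, hH.eq, mul_assoc]]
    rw [Matrix.trace_mul_comm, mul_assoc]
  have hval : hsInner z (hamTerm Hm z) = -Complex.I * (a - b) := by
    rw [hsInner, hamTerm, mul_smul_comm, Matrix.trace_smul, mul_sub, Matrix.trace_sub, ha, hb]
    simp [smul_eq_mul]
  rw [hval]
  have hia : (a - b).im = 0 := by
    have h5 : star (a - b) = a - b := by rw [star_sub, hsa, hsb]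
    exact (Complex.conj_eq_iff_im.mp h5)
  simp [Complex.mul_re, hia]
noncomputable def toELM : Matrix (Fin d) (Fin d) ℂ →ₗ[ℂ] EuclideanSpace ℂ (Fin d × Fin d) where
  toFun := toE
  map_add' := toE_add
  map_smul' := toE_smul

noncomputable def fromELM : EuclideanSpace ℂ (Fin d × Fin d) →ₗ[ℂ] Matrix (Fin d) (Fin d) ℂ where
  toFun := fromE
  map_add' := fun _ _ => rfl
  map_smul' := fun _ _ => rfl

noncomputable def matCLM (T : Matrix (Fin d) (Fin d) ℂ →ₗ[ℂ] Matrix (Fin d) (Fin d) ℂ) :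
    EuclideanSpace ℂ (Fin d × Fin d) →L[ℂ] EuclideanSpace ℂ (Fin d × Fin d) :=
  LinearMap.toContinuousLinearMap (toELM.comp (T.comp fromELM))

lemma matCLM_apply (T : Matrix (Fin d) (Fin d) ℂ →ₗ[ℂ] Matrix (Fin d) (Fin d) ℂ)
    (z : Matrix (Fin d) (Fin d) ℂ) : matCLM T (toE z) = toE (T z) := by
  simp [matCLM, toELM, fromELM]
  rfl

lemma matCLM_bound (T : Matrix (Fin d) (Fin d) ℂ →ₗ[ℂ] Matrix (Fin d) (Fin d) ℂ)
    (z : Matrix (Fin d) (Fin d) ℂ) : ‖toE (T z)‖ ≤ ‖matCLM T‖ * ‖toE z‖ := by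
  rw [← matCLM_apply]
  exact (matCLM T).le_opNorm (toE z)

noncomputable def totalDissipatorLM {m : ℕ} (L : Fin m → Matrix (Fin d) (Fin d) ℂ) :
    Matrix (Fin d) (Fin d) ℂ →ₗ[ℂ] Matrix (Fin d) (Fin d) ℂ where
  toFun := totalDissipator L
  map_add' := totalDissipator_add L
  map_smul' := totalDissipator_smul L

lemma deltaOp_add (a b : Matrix (Fin d) (Fin d) ℂ) :
    deltaOp (a + b) = deltaOp a + deltaOp b := by
  simp only [deltaOp, Matrix.trace_add, add_div, add_smul]
  abel

lemma deltaOp_smul (c : ℂ) (a : Matrix (Fin d) (Fin d) ℂ) :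
    deltaOp (c • a) = c • deltaOp a := by
  simp only [deltaOp, Matrix.trace_smul, smul_sub, smul_smul, smul_eq_mul, mul_div_assoc]

lemma hsInner_self_zero {A : Matrix (Fin d) (Fin d) ℂ} (h : hsInner A A = 0) : A = 0 := by
  rw [← inner_toE] at h
  exact toE_eq_zero (inner_self_eq_zero.mp h)

lemma hsInner_conj (A B : Matrix (Fin d) (Fin d) ℂ) :
    star (hsInner A B) = hsInner B A := by
  rw [← inner_toE, ← inner_toE]
  exact inner_conj_symm (𝕜 := ℂ) (toE B) (toE A)

lemma traceNorm_nonneg (A : Matrix (Fin d) (Fin d) ℂ) : 0 ≤ traceNorm A :=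
  Finset.sum_nonneg fun _ _ => Real.sqrt_nonneg _

lemma trace_eq_sum_eigenvalues {A : Matrix (Fin d) (Fin d) ℂ} (hA : A.IsHermitian) :
    A.trace = ∑ i, (hA.eigenvalues i : ℂ) := by
  conv_lhs => rw [hA.spectral_theorem, Unitary.conjStarAlgAut_apply]
  rw [Matrix.trace_mul_cycle]
  rw [show (star (hA.eigenvectorUnitary : Matrix (Fin d) (Fin d) ℂ)) *
      (hA.eigenvectorUnitary : Matrix (Fin d) (Fin d) ℂ) = 1 from
    Matrix.UnitaryGroup.star_mul_self _]
  rw [one_mul, Matrix.trace_diagonal]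
  rfl

lemma frobNorm_eq_sqrt_sum (A : Matrix (Fin d) (Fin d) ℂ) :
    frobNorm A = Real.sqrt (∑ i,
      (Matrix.posSemidef_conjTranspose_mul_self A).isHermitian.eigenvalues i) := by
  rw [frobNorm, trace_eq_sum_eigenvalues (Matrix.posSemidef_conjTranspose_mul_self A).isHermitian]
  congr 1
  rw [Complex.re_sum]
  simp

lemma frobNorm_le_traceNorm (A : Matrix (Fin d) (Fin d) ℂ) : frobNorm A ≤ traceNorm A := by
  set hB := (Matrix.posSemidef_conjTranspose_mul_self A)
  have hnn : ∀ i, 0 ≤ hB.isHermitian.eigenvalues i := hB.eigenvalues_nonneg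
  rw [frobNorm_eq_sqrt_sum, traceNorm]
  have h1 : ∑ i, hB.isHermitian.eigenvalues i
      ≤ (∑ i, Real.sqrt (hB.isHermitian.eigenvalues i)) ^ 2 := by
    have := Finset.sum_sq_le_sq_sum_of_nonneg
      (s := Finset.univ) (f := fun i => Real.sqrt (hB.isHermitian.eigenvalues i))
      (fun i _ => Real.sqrt_nonneg _)
    simpa [Real.sq_sqrt, hnn] using this
  calc Real.sqrt (∑ i, hB.isHermitian.eigenvalues i)
      ≤ Real.sqrt ((∑ i, Real.sqrt (hB.isHermitian.eigenvalues i)) ^ 2) := Real.sqrt_le_sqrt h1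
    _ = _ := Real.sqrt_sq (Finset.sum_nonneg fun _ _ => Real.sqrt_nonneg _)

lemma traceNorm_le_sqrt_card_mul_frobNorm (A : Matrix (Fin d) (Fin d) ℂ) :
    traceNorm A ≤ Real.sqrt d * frobNorm A := by
  set hB := (Matrix.posSemidef_conjTranspose_mul_self A)
  have hnn : ∀ i, 0 ≤ hB.isHermitian.eigenvalues i := hB.eigenvalues_nonneg
  rw [frobNorm_eq_sqrt_sum, traceNorm]
  have h1 : (∑ i, Real.sqrt (hB.isHermitian.eigenvalues i)) ^ 2
      ≤ d * ∑ i, hB.isHermitian.eigenvalues i := by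
    have := sq_sum_le_card_mul_sum_sq
      (s := Finset.univ) (f := fun i => Real.sqrt (hB.isHermitian.eigenvalues i))
    simpa [Real.sq_sqrt, hnn] using this
  calc (∑ i, Real.sqrt (hB.isHermitian.eigenvalues i))
      = Real.sqrt ((∑ i, Real.sqrt (hB.isHermitian.eigenvalues i)) ^ 2) :=
        (Real.sqrt_sq (Finset.sum_nonneg fun _ _ => Real.sqrt_nonneg _)).symm
    _ ≤ Real.sqrt (d * ∑ i, hB.isHermitian.eigenvalues i) := Real.sqrt_le_sqrt h1
    _ = Real.sqrt d * Real.sqrt (∑ i, hB.isHermitian.eigenvalues i) :=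
        Real.sqrt_mul (by positivity) _

lemma hsInner_add_left (X Y C : Matrix (Fin d) (Fin d) ℂ) :
    hsInner (X + Y) C = hsInner X C + hsInner Y C := by
  rw [← inner_toE, toE_add, inner_add_left, inner_toE, inner_toE]

lemma hsInner_smul_left (c : ℂ) (X C : Matrix (Fin d) (Fin d) ℂ) :
    hsInner (c • X) C = star c * hsInner X C := by
  rw [← inner_toE, toE_smul, inner_smul_left, inner_toE]
  rfl

lemma hsInner_add_right (X A B : Matrix (Fin d) (Fin d) ℂ) :
    hsInner X (A + B) = hsInner X A + hsInner X B := by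
  rw [← inner_toE, toE_add, inner_add_right, inner_toE, inner_toE]

lemma hsInner_smul_right (c : ℂ) (X A : Matrix (Fin d) (Fin d) ℂ) :
    hsInner X (c • A) = c * hsInner X A := by
  rw [← inner_toE, toE_smul, inner_smul_right, inner_toE]

lemma hsInner_sub_right (X A B : Matrix (Fin d) (Fin d) ℂ) :
    hsInner X (A - B) = hsInner X A - hsInner X B := by
  rw [← inner_toE, toE_sub, inner_sub_right, inner_toE, inner_toE]
/-- if the second largest eigenvalue `μ₂` of
`D̃ = Δ ∘ ((D + D†)/2) ∘ Δ` is negative, then the dissipator is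
Hamiltonian-independently contractive with rate `|μ₂|` and constant `√d`. -/
theorem eigenvalue_condition_contractive {d m : ℕ}
    (L : Fin m → Matrix (Fin d) (Fin d) ℂ)
    (Dadj : Matrix (Fin d) (Fin d) ℂ → Matrix (Fin d) (Fin d) ℂ)
    -- `Dadj` is the adjoint of the total dissipator w.r.t. the HS inner product:
    (hadj : ∀ A B : Matrix (Fin d) (Fin d) ℂ,
      hsInner A (totalDissipator L B) = hsInner (Dadj A) B)
    (μ2 : ℝ)
    (hμ2 : μ2 = sSup { r : ℝ | ∃ x : Matrix (Fin d) (Fin d) ℂ,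
      x.IsHermitian ∧ x.trace = 0 ∧ frobNorm x = 1 ∧
      r = (hsInner x (deltaOp (((1 : ℂ)/2) •
        (totalDissipator L (deltaOp x) + Dadj (deltaOp x))))).re })
    (hneg : μ2 < 0) :
    (∀ H : ℝ → Matrix (Fin d) (Fin d) ℂ, IsHamiltonianFamily H →
      ∀ s t : ℝ, 0 ≤ s → s ≤ t → ∀ ρ σ : ℝ → Matrix (Fin d) (Fin d) ℂ,
        IsSolution (driven H L) s ρ → IsSolution (driven H L) s σ →
        IsDensity (ρ s) → IsDensity (σ s) →
        frobNorm (ρ t - σ t) ≤ Real.exp (-|μ2| * (t - s)) * frobNorm (ρ s - σ s) ∧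
        traceNorm (ρ t - σ t) ≤
          Real.sqrt d * Real.exp (-|μ2| * (t - s)) * traceNorm (ρ s - σ s)) ∧
    HamIndepContractive L := by
  classical
  -- basic facts about `Dadj`
  have hadj' : ∀ A B, hsInner (Dadj A) B = hsInner A (totalDissipator L B) :=
    fun A B => (hadj A B).symm
  have hcancel : ∀ M N : Matrix (Fin d) (Fin d) ℂ,
      (∀ B, hsInner M B = hsInner N B) → M = N := by
    intro M N h
    have e : ∀ B, hsInner (M - N) B = 0 := by
      intro B
      rw [← inner_toE, toE_sub, inner_sub_left, inner_toE, inner_toE, h B, sub_self]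
    exact sub_eq_zero.mp (hsInner_self_zero (e (M - N)))
  have hDadj_add : ∀ A B, Dadj (A + B) = Dadj A + Dadj B := by
    intro A B
    apply hcancel
    intro C
    rw [hadj', hsInner_add_left, hsInner_add_left, hadj', hadj']
  have hDadj_smul : ∀ (c : ℂ) A, Dadj (c • A) = c • Dadj A := by
    intro c A
    apply hcancel
    intro C
    rw [hadj', hsInner_smul_left, hsInner_smul_left, hadj']
  -- the symmetrized operator as a linear map
  set W : Matrix (Fin d) (Fin d) ℂ → Matrix (Fin d) (Fin d) ℂ := fun x =>
    deltaOp (((1 : ℂ)/2) • (totalDissipator L (deltaOp x) + Dadj (deltaOp x))) with hWdef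
  have hW_add : ∀ a b, W (a + b) = W a + W b := by
    intro a b
    simp only [hWdef, deltaOp_add, totalDissipator_add, hDadj_add, smul_add]
    abel
  have hW_smul : ∀ (c : ℂ) a, W (c • a) = c • W a := by
    intro c a
    simp only [hWdef, deltaOp_smul, totalDissipator_smul, hDadj_smul, ← smul_add,
      smul_smul, mul_comm]
  set WL : Matrix (Fin d) (Fin d) ℂ →ₗ[ℂ] Matrix (Fin d) (Fin d) ℂ :=
    { toFun := W, map_add' := hW_add, map_smul' := hW_smul } with hWLdef
  set DL : Matrix (Fin d) (Fin d) ℂ →ₗ[ℂ] Matrix (Fin d) (Fin d) ℂ :=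
    totalDissipatorLM L with hDLdef
  -- boundedness of the sup set
  set S : Set ℝ := { r : ℝ | ∃ x : Matrix (Fin d) (Fin d) ℂ,
      x.IsHermitian ∧ x.trace = 0 ∧ frobNorm x = 1 ∧
      r = (hsInner x (deltaOp (((1 : ℂ)/2) •
        (totalDissipator L (deltaOp x) + Dadj (deltaOp x))))).re } with hSdef
  have hbdd : BddAbove S := by
    refine ⟨‖matCLM WL‖, ?_⟩
    rintro r ⟨x, hx1, hx2, hx3, rfl⟩
    have hx3' : ‖toE x‖ = 1 := by rw [← frobNorm_toE]; exact hx3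
    have h1 : (hsInner x (W x)).re ≤ ‖hsInner x (W x)‖ := by
      exact Complex.re_le_norm _
    have h2 : ‖hsInner x (W x)‖ ≤ ‖toE x‖ * ‖toE (W x)‖ := by
      rw [← inner_toE]
      exact norm_inner_le_norm (𝕜 := ℂ) _ _
    have h3 : ‖toE (W x)‖ ≤ ‖matCLM WL‖ * ‖toE x‖ := matCLM_bound WL x
    calc (hsInner x (W x)).re ≤ ‖toE x‖ * ‖toE (W x)‖ := le_trans h1 h2
      _ ≤ ‖toE x‖ * (‖matCLM WL‖ * ‖toE x‖) := mul_le_mul_of_nonneg_left h3 (norm_nonneg _)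
      _ = ‖matCLM WL‖ := by rw [hx3']; ring
  -- the key eigenvalue bound
  have key : ∀ z : Matrix (Fin d) (Fin d) ℂ, z.IsHermitian → z.trace = 0 →
      (hsInner z (totalDissipator L z)).re ≤ μ2 * ‖toE z‖ ^ 2 := by
    intro z hz htr
    rcases eq_or_ne z 0 with rfl | hz0
    · simp [hsInner, toE_zero]
    · set c : ℝ := ‖toE z‖ with hcdef
      have hc : 0 < c := norm_pos_iff.mpr (fun h => hz0 (toE_eq_zero h))
      set u : Matrix (Fin d) (Fin d) ℂ := ((c⁻¹ : ℝ) : ℂ) • z with hudef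
      have hu1 : u.IsHermitian := by
        rw [Matrix.IsHermitian, hudef, Matrix.conjTranspose_smul, hz.eq]
        congr 1
        simp [Complex.star_def, Complex.conj_ofReal]
      have hu2 : u.trace = 0 := by rw [hudef, Matrix.trace_smul, htr, smul_zero]
      have hu3 : frobNorm u = 1 := by
        rw [frobNorm_toE, hudef, toE_smul, norm_smul]
        rw [Complex.norm_real, Real.norm_eq_abs, abs_of_pos (inv_pos.mpr hc)]
        exact inv_mul_cancel₀ hc.ne'
      have hmem : (hsInner u (deltaOp (((1 : ℂ)/2) •
          (totalDissipator L (deltaOp u) + Dadj (deltaOp u))))).re ∈ S :=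
        ⟨u, hu1, hu2, hu3, rfl⟩
      have hle : (hsInner u (deltaOp (((1 : ℂ)/2) •
          (totalDissipator L (deltaOp u) + Dadj (deltaOp u))))).re ≤ μ2 := by
        rw [hμ2]
        exact le_csSup hbdd hmem
      have htru : (uᴴ).trace = 0 := by
        rw [Matrix.trace_conjTranspose, hu2, star_zero]
      have hdel : ∀ w, hsInner u (deltaOp w) = hsInner u w := by
        intro w
        rw [deltaOp, hsInner_sub_right, hsInner_smul_right]
        have h5 : hsInner u (1 : Matrix (Fin d) (Fin d) ℂ) = 0 := by
          rw [hsInner, mul_one, htru]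
        rw [h5, mul_zero, sub_zero]
      have hΔu : deltaOp u = u := by
        rw [deltaOp, hu2]
        simp
      have h2 : hsInner u (Dadj u) = star (hsInner u (totalDissipator L u)) := by
        have e1 : star (hsInner u (Dadj u)) = hsInner u (totalDissipator L u) := by
          rw [hsInner_conj, hadj']
        rw [← e1, star_star]
      have hred : (hsInner u (deltaOp (((1 : ℂ)/2) •
          (totalDissipator L (deltaOp u) + Dadj (deltaOp u))))).re
          = (hsInner u (totalDissipator L u)).re := by
        rw [hΔu, hdel, hsInner_smul_right, hsInner_add_right, h2]
        set w := hsInner u (totalDissipator L u)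
        simp only [Complex.add_re, Complex.mul_re, Complex.add_im, Complex.conj_re,
          Complex.conj_im]
        norm_num
        ring
      have hsc : (hsInner u (totalDissipator L u)).re
          = (c⁻¹)^2 * (hsInner z (totalDissipator L z)).re := by
        rw [hudef, totalDissipator_smul, hsInner_smul_left, hsInner_smul_right]
        rw [Complex.star_def, Complex.conj_ofReal, ← mul_assoc, ← Complex.ofReal_mul]
        rw [Complex.re_ofReal_mul]
        ring
      rw [hred, hsc] at hle
      have hc2 : (0:ℝ) < c ^ 2 := by positivity
      have := mul_le_mul_of_nonneg_left hle hc2.le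
      calc (hsInner z (totalDissipator L z)).re
          = c ^ 2 * ((c⁻¹)^2 * (hsInner z (totalDissipator L z)).re) := by
            field_simp
        _ ≤ c ^ 2 * μ2 := this
        _ = μ2 * ‖toE z‖ ^ 2 := by rw [hcdef]; ring
  -- conjugate-transpose of a solution is a solution
  have hconj_sol : ∀ (H : ℝ → Matrix (Fin d) (Fin d) ℂ), IsHamiltonianFamily H →
      ∀ (s : ℝ) (τ : ℝ → Matrix (Fin d) (Fin d) ℂ), IsSolution (driven H L) s τ →
      IsSolution (driven H L) s (fun u => (τ u)ᴴ) := by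
    intro H hH s τ hτ t ht i j
    have h2 := (hτ t ht j i).star
    have e1 : (driven H L t ((τ t)ᴴ)) i j = star ((driven H L t (τ t)) j i) := by
      rw [← driven_conjTranspose L (hH.1 t), Matrix.conjTranspose_apply]
    rw [e1]
    exact h2
  -- hermiticity propagation
  have herm : ∀ (H : ℝ → Matrix (Fin d) (Fin d) ℂ), IsHamiltonianFamily H →
      ∀ (s : ℝ) (τ : ℝ → Matrix (Fin d) (Fin d) ℂ), IsSolution (driven H L) s τ →
      (τ s).IsHermitian → ∀ u, s ≤ u → (τ u).IsHermitian := by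
    intro H hH s τ hτ h0 u hu
    set τc : ℝ → Matrix (Fin d) (Fin d) ℂ := fun r => (τ r)ᴴ with hτcdef
    have hτc := hconj_sol H hH s τ hτ
    set z : ℝ → Matrix (Fin d) (Fin d) ℂ := fun r => τ r - τc r with hzdef
    have hzder : ∀ r, s ≤ r → ∀ i j, HasDerivAt (fun w => z w i j)
        ((driven H L r (z r)) i j) r := by
      intro r hr i j
      have h1 := (hτ r hr i j).sub (hτc r hr i j)
      have e : (driven H L r (z r)) i j
          = (driven H L r (τ r)) i j - (driven H L r (τc r)) i j := by
        rw [hzdef]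
        rw [driven_sub, Matrix.sub_apply]
      rw [e]
      exact h1
    set v : ℝ → EuclideanSpace ℂ (Fin d × Fin d) := fun r => toE (z r) with hvdef
    have hd : ∀ r, s ≤ r → HasDerivAt v (toE (driven H L r (z r))) r :=
      fun r hr => hasDerivAt_toE (hzder r hr)
    have hb : ∀ r, s ≤ r → (inner ℂ (v r) (toE (driven H L r (z r))) : ℂ).re
        ≤ ‖matCLM DL‖ * ‖v r‖ ^ 2 := by
      intro r hr
      have hv : v r = toE (z r) := rfl
      rw [hv, inner_toE, driven, hsInner_add_right, Complex.add_re,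
        re_hsInner_hamTerm (hH.1 r), zero_add]
      have h1 : (hsInner (z r) (totalDissipator L (z r))).re
          ≤ ‖hsInner (z r) (totalDissipator L (z r))‖ := by
        exact Complex.re_le_norm _
      have h2 : ‖hsInner (z r) (totalDissipator L (z r))‖
          ≤ ‖toE (z r)‖ * ‖toE (totalDissipator L (z r))‖ := by
        rw [← inner_toE]; exact norm_inner_le_norm (𝕜 := ℂ) _ _
      have h3 : ‖toE (totalDissipator L (z r))‖ ≤ ‖matCLM DL‖ * ‖toE (z r)‖ :=
        matCLM_bound DL (z r)
      calc (hsInner (z r) (totalDissipator L (z r))).re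
          ≤ ‖toE (z r)‖ * ‖toE (totalDissipator L (z r))‖ := le_trans h1 h2
        _ ≤ ‖toE (z r)‖ * (‖matCLM DL‖ * ‖toE (z r)‖) :=
            mul_le_mul_of_nonneg_left h3 (norm_nonneg _)
        _ = ‖matCLM DL‖ * ‖toE (z r)‖ ^ 2 := by ring
    have hdecay := norm_decay hd hb u hu
    have hvs : v s = 0 := by
      have : z s = 0 := by rw [hzdef]; simp only; rw [hτcdef]; simp only; rw [h0.eq, sub_self]
      rw [hvdef]; simp only [this, toE_zero]
    have h8 : Real.exp (‖matCLM DL‖ * (u - s)) * ‖v s‖ = 0 := by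
      rw [hvs, norm_zero, mul_zero]
    have hvu : v u = 0 := norm_le_zero_iff.mp (le_trans hdecay (le_of_eq h8))
    have hzu : z u = 0 := toE_eq_zero hvu
    have : τ u - (τ u)ᴴ = 0 := hzu
    rw [Matrix.IsHermitian]
    have h6 := sub_eq_zero.mp this
    exact h6.symm
  -- the master estimate
  have main : ∀ (H : ℝ → Matrix (Fin d) (Fin d) ℂ), IsHamiltonianFamily H →
      ∀ s t : ℝ, 0 ≤ s → s ≤ t → ∀ ρ σ : ℝ → Matrix (Fin d) (Fin d) ℂ,
        IsSolution (driven H L) s ρ → IsSolution (driven H L) s σ →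
        IsDensity (ρ s) → IsDensity (σ s) →
        frobNorm (ρ t - σ t) ≤ Real.exp (-|μ2| * (t - s)) * frobNorm (ρ s - σ s) := by
    intro H hH s t hs hst ρ σ hρ hσ hρs hσs
    set z : ℝ → Matrix (Fin d) (Fin d) ℂ := fun r => ρ r - σ r with hzdef
    have hzder : ∀ r, s ≤ r → ∀ i j, HasDerivAt (fun w => z w i j)
        ((driven H L r (z r)) i j) r := by
      intro r hr i j
      have h1 := (hρ r hr i j).sub (hσ r hr i j)
      have e : (driven H L r (z r)) i j
          = (driven H L r (ρ r)) i j - (driven H L r (σ r)) i j := by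
        rw [hzdef]
        rw [driven_sub, Matrix.sub_apply]
      rw [e]
      exact h1
    have hρh := herm H hH s ρ hρ hρs.1.1
    have hσh := herm H hH s σ hσ hσs.1.1
    have hzh : ∀ r, s ≤ r → (z r).IsHermitian := fun r hr => (hρh r hr).sub (hσh r hr)
    have hder0 : ∀ r, s ≤ r → HasDerivAt (fun w => (z w).trace) 0 r := by
      intro r hr
      have h1 : HasDerivAt (fun w => ∑ i, z w i i) (∑ i, (driven H L r (z r)) i i) r :=
        HasDerivAt.fun_sum (fun i _ => hzder r hr i i)
      have h2 : (∑ i, (driven H L r (z r)) i i) = (driven H L r (z r)).trace := rfl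
      rw [h2, trace_driven] at h1
      exact h1
    have hztr : ∀ r, s ≤ r → (z r).trace = 0 := by
      intro r hr
      have hconst := constant_of_has_deriv_right_zero
        (f := fun w => (z w).trace) (a := s) (b := r)
        (fun y hy => (hder0 y hy.1).continuousAt.continuousWithinAt)
        (fun y hy => (hder0 y hy.1).hasDerivWithinAt)
      have h7 := hconst r (Set.right_mem_Icc.mpr hr)
      rw [show (z r).trace = (z s).trace from h7]
      show (ρ s - σ s).trace = 0
      rw [Matrix.trace_sub, hρs.2, hσs.2, sub_self]
    set v : ℝ → EuclideanSpace ℂ (Fin d × Fin d) := fun r => toE (z r) with hvdef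
    have hd : ∀ r, s ≤ r → HasDerivAt v (toE (driven H L r (z r))) r :=
      fun r hr => hasDerivAt_toE (hzder r hr)
    have hb : ∀ r, s ≤ r → (inner ℂ (v r) (toE (driven H L r (z r))) : ℂ).re
        ≤ μ2 * ‖v r‖ ^ 2 := by
      intro r hr
      have hv : v r = toE (z r) := rfl
      rw [hv, inner_toE, driven, hsInner_add_right, Complex.add_re,
        re_hsInner_hamTerm (hH.1 r), zero_add]
      exact key (z r) (hzh r hr) (hztr r hr)
    have hdecay := norm_decay hd hb t hst
    have habs2 : -|μ2| = μ2 := by rw [abs_of_neg hneg]; ring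
    rw [habs2]
    calc frobNorm (ρ t - σ t) = ‖v t‖ := frobNorm_toE _
      _ ≤ Real.exp (μ2 * (t - s)) * ‖v s‖ := hdecay
      _ = Real.exp (μ2 * (t - s)) * frobNorm (ρ s - σ s) := by rw [frobNorm_toE]
  have habs : -|μ2| = μ2 := by rw [abs_of_neg hneg]; ring
  have mainTN : ∀ (H : ℝ → Matrix (Fin d) (Fin d) ℂ), IsHamiltonianFamily H →
      ∀ s t : ℝ, 0 ≤ s → s ≤ t → ∀ ρ σ : ℝ → Matrix (Fin d) (Fin d) ℂ,
        IsSolution (driven H L) s ρ → IsSolution (driven H L) s σ →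
        IsDensity (ρ s) → IsDensity (σ s) →
        traceNorm (ρ t - σ t) ≤
          Real.sqrt d * Real.exp (-|μ2| * (t - s)) * traceNorm (ρ s - σ s) := by
    intro H hH s t hs hst ρ σ hρ hσ hρs hσs
    have h1 := main H hH s t hs hst ρ σ hρ hσ hρs hσs
    have h2 : traceNorm (ρ t - σ t) ≤ Real.sqrt d * frobNorm (ρ t - σ t) :=
      traceNorm_le_sqrt_card_mul_frobNorm _
    have h3 : frobNorm (ρ s - σ s) ≤ traceNorm (ρ s - σ s) := frobNorm_le_traceNorm _
    have hexp : (0:ℝ) < Real.exp (-|μ2| * (t - s)) := Real.exp_pos _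
    have hsd : (0:ℝ) ≤ Real.sqrt d := Real.sqrt_nonneg _
    calc traceNorm (ρ t - σ t) ≤ Real.sqrt d * frobNorm (ρ t - σ t) := h2
      _ ≤ Real.sqrt d * (Real.exp (-|μ2| * (t - s)) * frobNorm (ρ s - σ s)) := by
          exact mul_le_mul_of_nonneg_left h1 hsd
      _ ≤ Real.sqrt d * (Real.exp (-|μ2| * (t - s)) * traceNorm (ρ s - σ s)) := by
          exact mul_le_mul_of_nonneg_left (mul_le_mul_of_nonneg_left h3 hexp.le) hsd
      _ = Real.sqrt d * Real.exp (-|μ2| * (t - s)) * traceNorm (ρ s - σ s) := by ring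
  refine ⟨fun H hH s t hs hst ρ σ hρ hσ hρs hσs =>
    ⟨main H hH s t hs hst ρ σ hρ hσ hρs hσs, mainTN H hH s t hs hst ρ σ hρ hσ hρs hσs⟩, ?_⟩
  intro H hH
  refine ⟨Real.sqrt d + 1, |μ2|, by positivity, abs_pos.mpr hneg.ne, ?_⟩
  intro s t hs hst ρ σ hρ hσ hρs hσs
  have h1 := mainTN H hH s t hs hst ρ σ hρ hσ hρs hσs
  have hexp : (0:ℝ) < Real.exp (-|μ2| * (t - s)) := Real.exp_pos _
  have htn : (0:ℝ) ≤ traceNorm (ρ s - σ s) := traceNorm_nonneg _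
  calc traceNorm (ρ t - σ t)
      ≤ Real.sqrt d * Real.exp (-|μ2| * (t - s)) * traceNorm (ρ s - σ s) := h1
    _ ≤ (Real.sqrt d + 1) * Real.exp (-|μ2| * (t - s)) * traceNorm (ρ s - σ s) := by
        have : Real.sqrt d ≤ Real.sqrt d + 1 := by linarith
        nlinarith [Real.sqrt_nonneg (d:ℝ), hexp.le, htn, mul_pos hexp hexp]
    _ = (Real.sqrt d + 1) * Real.exp (-|μ2| * (t - s)) * traceNorm (ρ s - σ s) := rfl

end Paper
end

section
/- On M_4(ℂ) ≅ M_2(ℂ) ⊗ M_2(ℂ), let D = Σ_{i=1}^3 D_{L_i} with jump operators L_1 = (σᶻ + 2σ⁻) ⊗ I, L_2 = |1⟩⟨1| ⊗ σ⁻, L_3 = |1⟩⟨1| ⊗ σ⁺. Then: (a) a matrix X ∈ M_4(ℂ) satisfies D(X) = 0 if and only if X = α·([[6, −2], [−2, 1]] ⊗ I) for some α ∈ ℂ; in particular σ_∞ = (1/14)·[[6, −2], [−2, 1]] ⊗ I is the unique density matrix annihilated by D. (b) For the Lindbladian L = −i[σʸ ⊗ I, ·] + D, one has L(|0⟩⟨0|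 ⊗ M) = 0 for every M ∈ M_2(ℂ); consequently L has more than one fixed density matrix and does not generate exponentially contractive dynamics. -/
open scoped ComplexOrder Kronecker
open Matrix

namespace Paper

/-- a constant Lindbladian generates exponentially contractive dynamics. -/
def GeneratesExpContractive {n : Type*} [Fintype n] [DecidableEq n]
    (Lop : Matrix n n ℂ → Matrix n n ℂ) : Prop :=
  ∃ K γ : ℝ, 0 < K ∧ 0 < γ ∧
    ∀ ρ σ : ℝ → Matrix n n ℂ,
      IsSolution (fun _ => Lop) 0 ρ → IsSolution (fun _ => Lop) 0 σ →
      IsDensity (ρ 0) → IsDensity (σ 0) →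
      ∀ t : ℝ, 0 ≤ t →
        traceNorm (ρ t - σ t) ≤ K * Real.exp (-γ * t) * traceNorm (ρ 0 - σ 0)


lemma traceNorm_pos {N : Type*} [Fintype N] [DecidableEq N] (A : Matrix N N ℂ) (hA : A ≠ 0) :
    0 < traceNorm A := by
  have hP := Matrix.posSemidef_conjTranspose_mul_self A
  have hTnn : 0 ≤ traceNorm A :=
    Finset.sum_nonneg fun i _ => Real.sqrt_nonneg _
  rcases hTnn.lt_or_eq with h | h
  · exact h
  · exfalso
    have hall := (Finset.sum_eq_zero_iff_of_nonneg
      (fun i _ => Real.sqrt_nonneg (hP.isHermitian.eigenvalues i))).1 h.symm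
    have heig : ∀ i, hP.isHermitian.eigenvalues i = 0 := fun i => by
      have := hall i (Finset.mem_univ i)
      have hnn := hP.eigenvalues_nonneg i
      nlinarith [Real.sq_sqrt hnn, this]
    have hzero : Aᴴ * A = 0 := by
      rw [hP.isHermitian.spectral_theorem]
      have : (RCLike.ofReal ∘ hP.isHermitian.eigenvalues : N → ℂ) = fun _ => 0 :=
        funext fun i => by simp [heig i]
      rw [this]
      simp [Matrix.diagonal_zero]
    exact hA (Matrix.conjTranspose_mul_self_eq_zero.1 hzero)

lemma not_contractive_of_two_fixed
    (Lop : Matrix (Fin 2 × Fin 2) (Fin 2 × Fin 2) ℂ → Matrix (Fin 2 × Fin 2) (Fin 2 × Fin 2) ℂ)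
    (σ₁ σ₂ : Matrix (Fin 2 × Fin 2) (Fin 2 × Fin 2) ℂ)
    (hfix1 : Lop σ₁ = 0) (hfix2 : Lop σ₂ = 0)
    (hne : σ₁ ≠ σ₂) (hd1 : IsDensity σ₁) (hd2 : IsDensity σ₂) :
    ¬ GeneratesExpContractive Lop := by
  rintro ⟨K, γ, hK, hγ, h⟩
  have hsol : ∀ A : Matrix (Fin 2 × Fin 2) (Fin 2 × Fin 2) ℂ, Lop A = 0 →
      IsSolution (fun _ => Lop) 0 (fun _ => A) := by
    intro A hA t ht i j
    have h0 : Lop A i j = 0 := by rw [hA]; rfl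
    simpa [h0] using hasDerivAt_const t (A i j)
  set t := max 0 ((Real.log K + 1)/γ) with htdef
  have ht0 : (0:ℝ) ≤ t := le_max_left _ _
  have key := h (fun _ => σ₁) (fun _ => σ₂) (hsol σ₁ hfix1) (hsol σ₂ hfix2) hd1 hd2 t ht0
  have hT : 0 < traceNorm (σ₁ - σ₂) :=
    traceNorm_pos _ (fun hz => hne (sub_eq_zero.1 hz))
  have hexp : Real.exp (-γ * t) ≤ Real.exp (-(Real.log K + 1)) := by
    apply Real.exp_le_exp.2
    have hle : (Real.log K + 1)/γ ≤ t := le_max_right _ _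
    have := (div_le_iff₀ hγ).1 hle
    nlinarith
  have hlt : K * Real.exp (-γ * t) < 1 := by
    have h2 : Real.exp (-(Real.log K + 1)) = 1/K * Real.exp (-1) := by
      rw [neg_add, Real.exp_add, Real.exp_neg, Real.exp_log hK]
      ring
    have h3 : Real.exp (-1 : ℝ) < 1 := Real.exp_lt_one_iff.2 (by norm_num)
    have h4 : K * Real.exp (-γ * t) ≤ Real.exp (-1 : ℝ) := by
      calc K * Real.exp (-γ * t) ≤ K * (1/K * Real.exp (-1)) := by nlinarith
        _ = Real.exp (-1 : ℝ) := by field_simp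
    linarith
  nlinarith [key, hT, hlt, Real.exp_pos (-γ * t)]

set_option maxHeartbeats 8000000 in
/-- the two-qubit counterexample. The dissipator with jump operators
`(σᶻ + 2σ⁻) ⊗ I`, `|1⟩⟨1| ⊗ σ⁻`, `|1⟩⟨1| ⊗ σ⁺` has kernel spanned by
`[[6,-2],[-2,1]] ⊗ I` and unique fixed density matrix `σ∞ = (1/14)·[[6,-2],[-2,1]] ⊗ I`,
but adding the Hamiltonian `σʸ ⊗ I` yields a Lindbladian annihilating all
`|0⟩⟨0| ⊗ M`, hence with more than one fixed density matrix, which does not generate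
exponentially contractive dynamics. -/
theorem two_qubit_counterexample
    (L : Fin 3 → Matrix (Fin 2 × Fin 2) (Fin 2 × Fin 2) ℂ)
    (hL : L = ![(!![1, 0; 0, -1] + (2 : ℂ) • !![0, 1; 0, 0]) ⊗ₖ
                  (1 : Matrix (Fin 2) (Fin 2) ℂ),
                !![0, 0; 0, 1] ⊗ₖ !![0, 1; 0, 0],
                !![0, 0; 0, 1] ⊗ₖ !![0, 0; 1, 0]]) :
    (∀ X : Matrix (Fin 2 × Fin 2) (Fin 2 × Fin 2) ℂ,
      totalDissipator L X = 0 ↔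
        ∃ α : ℂ, X = α • ((!![6, -2; -2, 1] : Matrix (Fin 2) (Fin 2) ℂ) ⊗ₖ
          (1 : Matrix (Fin 2) (Fin 2) ℂ))) ∧
    (IsDensity (((1 : ℂ)/14) • ((!![6, -2; -2, 1] : Matrix (Fin 2) (Fin 2) ℂ) ⊗ₖ
        (1 : Matrix (Fin 2) (Fin 2) ℂ))) ∧
      totalDissipator L (((1 : ℂ)/14) •
        ((!![6, -2; -2, 1] : Matrix (Fin 2) (Fin 2) ℂ) ⊗ₖ
          (1 : Matrix (Fin 2) (Fin 2) ℂ))) = 0 ∧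
      ∀ σ : Matrix (Fin 2 × Fin 2) (Fin 2 × Fin 2) ℂ,
        IsDensity σ → totalDissipator L σ = 0 →
          σ = ((1 : ℂ)/14) • ((!![6, -2; -2, 1] : Matrix (Fin 2) (Fin 2) ℂ) ⊗ₖ
            (1 : Matrix (Fin 2) (Fin 2) ℂ))) ∧
    (∀ M : Matrix (Fin 2) (Fin 2) ℂ,
      hamTerm ((!![0, -Complex.I; Complex.I, 0] : Matrix (Fin 2) (Fin 2) ℂ) ⊗ₖ
          (1 : Matrix (Fin 2) (Fin 2) ℂ))
        ((!![1, 0; 0, 0] : Matrix (Fin 2) (Fin 2) ℂ) ⊗ₖ M) +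
        totalDissipator L ((!![1, 0; 0, 0] : Matrix (Fin 2) (Fin 2) ℂ) ⊗ₖ M) = 0) ∧
    (∃ σ₁ σ₂ : Matrix (Fin 2 × Fin 2) (Fin 2 × Fin 2) ℂ, σ₁ ≠ σ₂ ∧
      IsDensity σ₁ ∧ IsDensity σ₂ ∧
      hamTerm ((!![0, -Complex.I; Complex.I, 0] : Matrix (Fin 2) (Fin 2) ℂ) ⊗ₖ
          (1 : Matrix (Fin 2) (Fin 2) ℂ)) σ₁ + totalDissipator L σ₁ = 0 ∧
      hamTerm ((!![0, -Complex.I; Complex.I, 0] : Matrix (Fin 2) (Fin 2) ℂ) ⊗ₖ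
          (1 : Matrix (Fin 2) (Fin 2) ℂ)) σ₂ + totalDissipator L σ₂ = 0) ∧
    ¬ GeneratesExpContractive (fun x =>
        hamTerm ((!![0, -Complex.I; Complex.I, 0] : Matrix (Fin 2) (Fin 2) ℂ) ⊗ₖ
          (1 : Matrix (Fin 2) (Fin 2) ℂ)) x + totalDissipator L x) := by
  subst hL
  have hfix : ∀ M : Matrix (Fin 2) (Fin 2) ℂ,
      hamTerm ((!![0, -Complex.I; Complex.I, 0] : Matrix (Fin 2) (Fin 2) ℂ) ⊗ₖ
          (1 : Matrix (Fin 2) (Fin 2) ℂ))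
        ((!![1, 0; 0, 0] : Matrix (Fin 2) (Fin 2) ℂ) ⊗ₖ M) +
        totalDissipator ![(!![1, 0; 0, -1] + (2 : ℂ) • !![0, 1; 0, 0]) ⊗ₖ
                  (1 : Matrix (Fin 2) (Fin 2) ℂ),
                !![0, 0; 0, 1] ⊗ₖ !![0, 1; 0, 0],
                !![0, 0; 0, 1] ⊗ₖ !![0, 0; 1, 0]]
          ((!![1, 0; 0, 0] : Matrix (Fin 2) (Fin 2) ℂ) ⊗ₖ M) = 0 := by
    intro M
    ext ⟨a, b⟩ ⟨c, d⟩
    fin_cases a <;> fin_cases b <;> fin_cases c <;> fin_cases d <;>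
      simp [hamTerm, totalDissipator, dissipator, Fin.sum_univ_three, Matrix.mul_apply,
        Fintype.sum_prod_type, Fin.sum_univ_two, Matrix.kroneckerMap_apply,
        Matrix.conjTranspose_apply, Matrix.one_apply, map_ofNat, Matrix.smul_apply,
        Complex.I_mul_I] <;> ring_nf <;> simp [Complex.I_sq]
  have hker : ∀ X : Matrix (Fin 2 × Fin 2) (Fin 2 × Fin 2) ℂ,
      totalDissipator ![(!![1, 0; 0, -1] + (2 : ℂ) • !![0, 1; 0, 0]) ⊗ₖ
                  (1 : Matrix (Fin 2) (Fin 2) ℂ),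
                !![0, 0; 0, 1] ⊗ₖ !![0, 1; 0, 0],
                !![0, 0; 0, 1] ⊗ₖ !![0, 0; 1, 0]] X = 0 ↔
        ∃ α : ℂ, X = α • ((!![6, -2; -2, 1] : Matrix (Fin 2) (Fin 2) ℂ) ⊗ₖ
          (1 : Matrix (Fin 2) (Fin 2) ℂ)) := by
    intro X
    constructor
    · intro hD
      refine ⟨X 1 1, ?_⟩
      have E := fun p q : Fin 2 × Fin 2 => congrFun (congrFun hD p) q
      have h0 := E (0,0) (0,0)
      have h1 := E (0,0) (0,1)
      have h2 := E (0,0) (1,0)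
      have h3 := E (0,0) (1,1)
      have h4 := E (0,1) (0,0)
      have h5 := E (0,1) (0,1)
      have h6 := E (0,1) (1,0)
      have h7 := E (0,1) (1,1)
      have h8 := E (1,0) (0,0)
      have h9 := E (1,0) (0,1)
      have h10 := E (1,0) (1,0)
      have h11 := E (1,0) (1,1)
      have h12 := E (1,1) (0,0)
      have h13 := E (1,1) (0,1)
      have h14 := E (1,1) (1,0)
      simp [totalDissipator, dissipator, Fin.sum_univ_three, Matrix.mul_apply,
        Fintype.sum_prod_type, Fin.sum_univ_two, Matrix.kroneckerMap_apply,
        Matrix.conjTranspose_apply, Matrix.one_apply, map_ofNat] at h0 h1 h2 h3 h4 h5 h6 h7 h8 h9 h10 h11 h12 h13 h14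
      ext ⟨a, b⟩ ⟨c, d⟩
      fin_cases a <;> fin_cases b <;> fin_cases c <;> fin_cases d <;>
        simp [Matrix.kroneckerMap_apply, Matrix.one_apply]
      · linear_combination (-33/4 : ℂ) * h0 + (-1/2 : ℂ) * h2 + (-1/2 : ℂ) * h8 + (-6 : ℂ) * h10
      · linear_combination (-33/4 : ℂ) * h1 + (-1/2 : ℂ) * h3 + (-1/2 : ℂ) * h9 + (-6 : ℂ) * h11
      · linear_combination (5/2 : ℂ) * h0 + (-1/9 : ℂ) * h2 + (1/9 : ℂ) * h8 + (2 : ℂ) * h10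
      · linear_combination (5/2 : ℂ) * h1 + (-1/9 : ℂ) * h3 + (1/9 : ℂ) * h9 + (2 : ℂ) * h11
      · linear_combination (-33/4 : ℂ) * h4 + (-1/2 : ℂ) * h6 + (-1/2 : ℂ) * h12 + (-6 : ℂ) * h14
      · linear_combination (-9/4 : ℂ) * h5 + (-1/2 : ℂ) * h7 + (-1/2 : ℂ) * h13
      · linear_combination (5/2 : ℂ) * h4 + (-1/9 : ℂ) * h6 + (1/9 : ℂ) * h12 + (2 : ℂ) * h14
      · linear_combination (1/2 : ℂ) * h5 + (-1/9 : ℂ) * h7 + (1/9 : ℂ) * h13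
      · linear_combination (5/2 : ℂ) * h0 + (1/9 : ℂ) * h2 + (-1/9 : ℂ) * h8 + (2 : ℂ) * h10
      · linear_combination (5/2 : ℂ) * h1 + (1/9 : ℂ) * h3 + (-1/9 : ℂ) * h9 + (2 : ℂ) * h11
      · linear_combination (-1 : ℂ) * h0 + (-1 : ℂ) * h10
      · linear_combination (-1 : ℂ) * h1 + (-1 : ℂ) * h11
      · linear_combination (5/2 : ℂ) * h4 + (1/9 : ℂ) * h6 + (-1/9 : ℂ) * h12 + (2 : ℂ) * h14
      · linear_combination (1/2 : ℂ) * h5 + (1/9 : ℂ) * h7 + (-1/9 : ℂ) * h13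
      · linear_combination (-1 : ℂ) * h4 + (-1 : ℂ) * h14
      · rfl
    · rintro ⟨α, rfl⟩
      ext ⟨a, b⟩ ⟨c, d⟩
      fin_cases a <;> fin_cases b <;> fin_cases c <;> fin_cases d <;>
        simp [totalDissipator, dissipator, Fin.sum_univ_three, Matrix.mul_apply,
          Fintype.sum_prod_type, Fin.sum_univ_two, Matrix.kroneckerMap_apply,
          Matrix.conjTranspose_apply, Matrix.one_apply, map_ofNat, Matrix.smul_apply] <;> ring
  have hd1 : IsDensity ((!![1, 0; 0, 0] : Matrix (Fin 2) (Fin 2) ℂ) ⊗ₖ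
      (!![1, 0; 0, 0] : Matrix (Fin 2) (Fin 2) ℂ)) := by
    constructor
    · have key : ((!![1, 0; 0, 0] : Matrix (Fin 2) (Fin 2) ℂ) ⊗ₖ !![1, 0; 0, 0])
          = ((!![1, 0; 0, 0] : Matrix (Fin 2) (Fin 2) ℂ) ⊗ₖ !![1, 0; 0, 0])ᴴ *
            ((!![1, 0; 0, 0] : Matrix (Fin 2) (Fin 2) ℂ) ⊗ₖ !![1, 0; 0, 0]) := by
        ext ⟨a, b⟩ ⟨c, d⟩
        fin_cases a <;> fin_cases b <;> fin_cases c <;> fin_cases d <;>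
          simp [Matrix.mul_apply, Fintype.sum_prod_type, Fin.sum_univ_two,
            Matrix.conjTranspose_apply, Matrix.kroneckerMap_apply]
      rw [key]
      exact Matrix.posSemidef_conjTranspose_mul_self _
    · simp [Matrix.trace, Matrix.diag, Fintype.sum_prod_type, Fin.sum_univ_two,
        Matrix.kroneckerMap_apply]
  have hd2 : IsDensity ((!![1, 0; 0, 0] : Matrix (Fin 2) (Fin 2) ℂ) ⊗ₖ
      (!![0, 0; 0, 1] : Matrix (Fin 2) (Fin 2) ℂ)) := by
    constructor
    · have key : ((!![1, 0; 0, 0] : Matrix (Fin 2) (Fin 2) ℂ) ⊗ₖ !![0, 0; 0, 1])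
          = ((!![1, 0; 0, 0] : Matrix (Fin 2) (Fin 2) ℂ) ⊗ₖ !![0, 0; 0, 1])ᴴ *
            ((!![1, 0; 0, 0] : Matrix (Fin 2) (Fin 2) ℂ) ⊗ₖ !![0, 0; 0, 1]) := by
        ext ⟨a, b⟩ ⟨c, d⟩
        fin_cases a <;> fin_cases b <;> fin_cases c <;> fin_cases d <;>
          simp [Matrix.mul_apply, Fintype.sum_prod_type, Fin.sum_univ_two,
            Matrix.conjTranspose_apply, Matrix.kroneckerMap_apply]
      rw [key]
      exact Matrix.posSemidef_conjTranspose_mul_self _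
    · simp [Matrix.trace, Matrix.diag, Fintype.sum_prod_type, Fin.sum_univ_two,
        Matrix.kroneckerMap_apply]
  have hne : (!![1, 0; 0, 0] : Matrix (Fin 2) (Fin 2) ℂ) ⊗ₖ
        (!![1, 0; 0, 0] : Matrix (Fin 2) (Fin 2) ℂ)
      ≠ (!![1, 0; 0, 0] : Matrix (Fin 2) (Fin 2) ℂ) ⊗ₖ !![0, 0; 0, 1] := by
    intro hcontra
    have := congrFun (congrFun hcontra ((0 : Fin 2), (0 : Fin 2))) ((0 : Fin 2), (0 : Fin 2))
    simp [Matrix.kroneckerMap_apply] at this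
  refine ⟨hker, ⟨?_, ?_, ?_⟩, hfix, ?_, ?_⟩
  · -- density of σ∞
    constructor
    · refine Matrix.PosSemidef.of_dotProduct_mulVec_nonneg ?_ ?_
      · ext ⟨a, b⟩ ⟨c, d⟩
        fin_cases a <;> fin_cases b <;> fin_cases c <;> fin_cases d <;>
          simp [Matrix.conjTranspose_apply, Matrix.kroneckerMap_apply, Matrix.one_apply,
            Matrix.smul_apply]
      · intro x
        have hx : dotProduct (star x)
            ((((1 : ℂ)/14) • ((!![6, -2; -2, 1] : Matrix (Fin 2) (Fin 2) ℂ) ⊗ₖ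
              (1 : Matrix (Fin 2) (Fin 2) ℂ))).mulVec x)
            = (1/14) * ((star (x (1,0) - 2 * x (0,0)) * (x (1,0) - 2 * x (0,0))
                + 2 * (star (x (0,0)) * x (0,0)))
              + (star (x (1,1) - 2 * x (0,1)) * (x (1,1) - 2 * x (0,1))
                + 2 * (star (x (0,1)) * x (0,1)))) := by
          simp [dotProduct, Matrix.mulVec, Fintype.sum_prod_type, Fin.sum_univ_two,
            Matrix.kroneckerMap_apply, Matrix.one_apply, Matrix.smul_apply]
          ring
        rw [hx]
        have h14 : (0:ℂ) ≤ 1/14 := by simp [Complex.le_def]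
        have h2 : (0:ℂ) ≤ 2 := by simp [Complex.le_def]
        refine mul_nonneg h14 (add_nonneg (add_nonneg (star_mul_self_nonneg _)
          (mul_nonneg h2 (star_mul_self_nonneg _)))
          (add_nonneg (star_mul_self_nonneg _) (mul_nonneg h2 (star_mul_self_nonneg _))))
    · simp [Matrix.trace, Matrix.diag, Fintype.sum_prod_type, Fin.sum_univ_two,
        Matrix.kroneckerMap_apply, Matrix.one_apply, Matrix.smul_apply]
      ring
  · -- σ∞ is fixed
    exact (hker _).2 ⟨(1 : ℂ)/14, rfl⟩
  · -- uniqueness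
    intro σ hσd hσ0
    obtain ⟨α, rfl⟩ := (hker σ).1 hσ0
    have htr := hσd.2
    have hα : α = (1 : ℂ)/14 := by
      simp [Matrix.trace, Matrix.diag, Fintype.sum_prod_type, Fin.sum_univ_two,
        Matrix.kroneckerMap_apply, Matrix.one_apply, Matrix.smul_apply] at htr
      linear_combination htr / 14
    rw [hα]
  · -- two distinct fixed densities
    exact ⟨(!![1, 0; 0, 0] : Matrix (Fin 2) (Fin 2) ℂ) ⊗ₖ !![1, 0; 0, 0],
      (!![1, 0; 0, 0] : Matrix (Fin 2) (Fin 2) ℂ) ⊗ₖ !![0, 0; 0, 1],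
      hne, hd1, hd2, hfix !![1, 0; 0, 0], hfix !![0, 0; 0, 1]⟩
  · -- not exponentially contractive
    exact not_contractive_of_two_fixed _
      ((!![1, 0; 0, 0] : Matrix (Fin 2) (Fin 2) ℂ) ⊗ₖ !![1, 0; 0, 0])
      ((!![1, 0; 0, 0] : Matrix (Fin 2) (Fin 2) ℂ) ⊗ₖ !![0, 0; 0, 1])
      (hfix !![1, 0; 0, 0]) (hfix !![0, 0; 0, 1]) hne hd1 hd2

end Paper
end
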